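/- Let (G,f) = der_θ(G,·) with θ^(n-1) = id, and suppose every idempotent of (G,f) is central in (G,·). Then Aut(G,f) is isomorphic to the semidirect product C_{Aut(G,·)}(θ) ⋉ Z*(G), where C_{Aut(G,·)}(θ) = {φ ∈ Aut(G,·) : φθ = θφ} acts on Z*(G) = {a ∈ Z(G) : a·θ(a)···θ^(n-1)(a) = a} by φ·a = φ(a). -/

import Mathlib

/-- The `(θ,b)`-derived `n`-ary operation on a group `G`. -/
def derOp {G : Type*} [Group G] (n : ℕ) (θ : MulAut G) (b : G) (x : Fin n → G) : G :=
  (List.ofFn fun i : Fin n => (θ ^ (i : ℕ)) (x i)).prod * b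

/-- The automorphism group of an `n`-ary groupoid `(G,f)`. -/
def nAryAut {G : Type*} [Group G] (n : ℕ) (f : (Fin n → G) → G) :
    Subgroup (Equiv.Perm G) where
  carrier := {ψ | ∀ x : Fin n → G, ψ (f x) = f (fun i => ψ (x i))}
  one_mem' := by intro x; simp
  mul_mem' := by
    intro ψ χ hψ hχ x
    simp only [Equiv.Perm.mul_apply, Set.mem_setOf_eq] at *
    rw [hχ, hψ]
  inv_mem' := by
    intro ψ hψ x
    apply ψ.injective
    rw [Equiv.Perm.coe_inv, Equiv.apply_symm_apply, hψ]
    congr 1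
    funext i
    rw [Equiv.apply_symm_apply]

section Aux
variable {G : Type*} [Group G]

lemma center_apply (θ : MulAut G) {a : G} (ha : a ∈ Subgroup.center G) :
    θ a ∈ Subgroup.center G := by
  rw [Subgroup.mem_center_iff] at ha ⊢
  intro b
  have h := congrArg θ (ha (θ⁻¹ b))
  simpa [map_mul] using h

lemma central_list_prod_mul {n : ℕ} (f g : Fin n → G)
    (hg : ∀ i, g i ∈ Subgroup.center G) :
    (List.ofFn fun i => f i * g i).prod = (List.ofFn f).prod * (List.ofFn g).prod := by
  induction n with
  | zero => simp
  | succ m ih =>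
    rw [List.ofFn_succ, List.ofFn_succ, List.ofFn_succ, List.prod_cons, List.prod_cons,
      List.prod_cons, ih (fun i => f i.succ) (fun i => g i.succ) (fun i => hg i.succ)]
    have h0 := Subgroup.mem_center_iff.mp (hg 0)
    set P := (List.ofFn fun i : Fin m => f i.succ).prod
    set Q := (List.ofFn fun i : Fin m => g i.succ).prod
    calc f 0 * g 0 * (P * Q) = f 0 * (g 0 * P * Q) := by group
      _ = f 0 * (P * g 0 * Q) := by rw [← h0 P]
      _ = f 0 * P * (g 0 * Q) := by group

lemma derOp_one (n : ℕ) (θ : MulAut G) :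
    derOp n θ 1 (fun _ : Fin n => (1 : G)) = 1 := by
  simp [derOp]

lemma derOp_mul_central (n : ℕ) (θ : MulAut G) (x : Fin n → G) {a : G}
    (ha : a ∈ Subgroup.center G) :
    derOp n θ 1 (fun i => x i * a) =
      derOp n θ 1 x * derOp n θ 1 (fun _ => a) := by
  simp only [derOp, map_mul, mul_one]
  exact central_list_prod_mul _ _ (fun i => center_apply _ ha)

lemma derOp_pair {n : ℕ} (hn : 2 ≤ n) (θ : MulAut G) (x y : G) :
    derOp n θ 1 (fun i : Fin n => if (i : ℕ) = 0 then x else if (i : ℕ) = 1 then y else 1)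
      = x * θ y := by
  obtain ⟨m, rfl⟩ : ∃ m, n = m + 2 := ⟨n - 2, by omega⟩
  rw [derOp, List.ofFn_succ, List.ofFn_succ, List.prod_cons, List.prod_cons]
  have htail : (List.ofFn fun i : Fin m =>
      (θ ^ ((i.succ.succ : Fin (m + 2)) : ℕ))
        (if ((i.succ.succ : Fin (m + 2)) : ℕ) = 0 then x
         else if ((i.succ.succ : Fin (m + 2)) : ℕ) = 1 then y else 1)).prod = 1 := by
    apply List.prod_eq_one
    intro z hz
    rw [List.mem_ofFn] at hz
    obtain ⟨i, rfl⟩ := hz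
    simp [Fin.val_succ]
  simp only [Fin.val_succ, Fin.val_zero] at htail ⊢
  rw [htail]
  simp

lemma comm_pow (θ φ : MulAut G) (h : ∀ g, φ (θ g) = θ (φ g)) (k : ℕ) (g : G) :
    φ ((θ ^ k) g) = (θ ^ k) (φ g) := by
  induction k generalizing g with
  | zero => simp
  | succ m ih =>
    simp only [pow_succ, MulAut.mul_apply]
    rw [ih, h]

lemma derOp_map {n : ℕ} (θ φ : MulAut G) (h : ∀ g, φ (θ g) = θ (φ g)) (x : Fin n → G) :
    derOp n θ 1 (fun i => φ (x i)) = φ (derOp n θ 1 x) := by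
  simp only [derOp, mul_one]
  have hl : (List.ofFn fun i : Fin n => (θ ^ (i : ℕ)) (φ (x i)))
      = (List.ofFn fun i : Fin n => (θ ^ (i : ℕ)) (x i)).map φ := by
    rw [List.map_ofFn]
    exact congrArg List.ofFn (funext fun i => (comm_pow θ φ h i (x i)).symm)
  rw [hl, ← map_list_prod]

end Aux


theorem aut_eq_semidirect_product {G : Type*} [Group G] (n : ℕ) (hn : 2 ≤ n)
    (θ : MulAut G) (hθ : θ ^ (n - 1) = 1)
    (hcent : ∀ a : G, derOp n θ 1 (fun _ : Fin n => a) = a → a ∈ Subgroup.center G) :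
    ∃ S : Subgroup G,
      (∀ a : G, a ∈ S ↔ a ∈ Subgroup.center G ∧ derOp n θ 1 (fun _ : Fin n => a) = a) ∧
      ∃ act : Subgroup.centralizer ({θ} : Set (MulAut G)) →* MulAut S,
        (∀ (φ : Subgroup.centralizer ({θ} : Set (MulAut G))) (a : S),
          ((act φ a : G)) = (φ : MulAut G) (a : G)) ∧
        Nonempty ((S ⋊[act] Subgroup.centralizer ({θ} : Set (MulAut G)))
          ≃* nAryAut n (derOp n θ 1)) := by
  classical
  let SS : Subgroup G :=
  { carrier := {a : G | a ∈ Subgroup.center G ∧ derOp n θ 1 (fun _ : Fin n => a) = a}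
    one_mem' := ⟨Subgroup.one_mem _, derOp_one n θ⟩
    mul_mem' := by
      rintro a b ⟨hac, hai⟩ ⟨hbc, hbi⟩
      exact ⟨Subgroup.mul_mem _ hac hbc, by
        simpa [hai, hbi] using derOp_mul_central n θ (fun _ : Fin n => a) hbc⟩
    inv_mem' := by
      rintro a ⟨hac, hai⟩
      refine ⟨Subgroup.inv_mem _ hac, ?_⟩
      have h := derOp_mul_central n θ (fun _ : Fin n => a) (Subgroup.inv_mem _ hac)
      simp only [mul_inv_cancel, derOp_one, hai] at h
      exact (inv_eq_of_mul_eq_one_right h.symm).symm }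
  have hSS : ∀ a : G, a ∈ SS ↔ a ∈ Subgroup.center G ∧
      derOp n θ 1 (fun _ : Fin n => a) = a := fun a => Iff.rfl
  have hcommC : ∀ φ : Subgroup.centralizer ({θ} : Set (MulAut G)), ∀ g : G,
      (φ : MulAut G) (θ g) = θ ((φ : MulAut G) g) := by
    intro φ g
    have h := Subgroup.mem_centralizer_iff.mp φ.2 θ (Set.mem_singleton θ)
    simpa [MulAut.mul_apply] using (DFunLike.congr_fun h g).symm
  have hmapS : ∀ (φ : Subgroup.centralizer ({θ} : Set (MulAut G))) (a : SS),
      ((φ : MulAut G) (a : G)) ∈ SS := by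
    intro φ a
    obtain ⟨hac, hai⟩ := a.2
    refine ⟨center_apply _ hac, ?_⟩
    have h := derOp_map (n := n) θ (φ : MulAut G) (hcommC φ) (fun _ : Fin n => (a : G))
    simpa [hai] using h
  let act : Subgroup.centralizer ({θ} : Set (MulAut G)) →* MulAut SS :=
  { toFun := fun φ =>
    { toFun := fun a => ⟨(φ : MulAut G) a, hmapS φ a⟩
      invFun := fun a => ⟨((φ⁻¹ : Subgroup.centralizer ({θ} : Set (MulAut G))) : MulAut G) a,
        hmapS φ⁻¹ a⟩
      left_inv := by intro a; ext; simp
      right_inv := by intro a; ext; simp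
      map_mul' := by intro a b; ext; simp }
    map_one' := by ext a; simp
    map_mul' := by intro φ χ; ext a; simp }
  refine ⟨SS, hSS, act, fun φ a => rfl, ?_⟩
  -- the homomorphism into nAryAut
  have hmemR : ∀ a : SS, Equiv.mulRight (a : G) ∈ nAryAut n (derOp n θ 1) := by
    intro a
    have h : ∀ x : Fin n → G, (Equiv.mulRight (a : G)) (derOp n θ 1 x)
        = derOp n θ 1 (fun i => (Equiv.mulRight (a : G)) (x i)) := by
      intro x
      obtain ⟨hac, hai⟩ := a.2
      simp only [Equiv.coe_mulRight]
      rw [derOp_mul_central n θ x hac, hai]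
    exact h
  let f₁ : SS →* nAryAut n (derOp n θ 1) :=
  { toFun := fun a => ⟨Equiv.mulRight (a : G), hmemR a⟩
    map_one' := by
      apply Subtype.ext; apply Equiv.ext; intro x; simp
    map_mul' := by
      intro a b
      apply Subtype.ext; apply Equiv.ext; intro x
      obtain ⟨hac, _⟩ := a.2
      have hc := Subgroup.mem_center_iff.mp hac (b : G)
      simp only [Subgroup.coe_mul, MulMemClass.coe_mul, Equiv.coe_mulRight,
        Equiv.Perm.mul_apply]
      rw [mul_assoc, ← hc] }
  have hmemA : ∀ φ : Subgroup.centralizer ({θ} : Set (MulAut G)),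
      ((φ : MulAut G) : Equiv.Perm G) ∈ nAryAut n (derOp n θ 1) := by
    intro φ
    have h : ∀ x : Fin n → G, ((φ : MulAut G) : Equiv.Perm G) (derOp n θ 1 x)
        = derOp n θ 1 (fun i => ((φ : MulAut G) : Equiv.Perm G) (x i)) := by
      intro x
      exact (derOp_map θ (φ : MulAut G) (hcommC φ) x).symm
    exact h
  let f₂ : Subgroup.centralizer ({θ} : Set (MulAut G)) →* nAryAut n (derOp n θ 1) :=
  { toFun := fun φ => ⟨((φ : MulAut G) : Equiv.Perm G), hmemA φ⟩
    map_one' := by apply Subtype.ext; apply Equiv.ext; intro x; simp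
    map_mul' := by
      intro φ χ
      apply Subtype.ext; apply Equiv.ext; intro x
      simp [MulAut.mul_apply] }
  have hcompat : ∀ g : Subgroup.centralizer ({θ} : Set (MulAut G)),
      f₁.comp ((act g).toMonoidHom) = (MulAut.conj (f₂ g)).toMonoidHom.comp f₁ := by
    intro g
    apply MonoidHom.ext; intro a
    apply Subtype.ext; apply Equiv.ext; intro x
    simp only [MonoidHom.comp_apply, MulAut.conj_apply, MulEquiv.coe_toMonoidHom]
    show x * ((g : MulAut G) a) = (g : MulAut G) (((g : MulAut G))⁻¹ x * (a : G))
    rw [map_mul, MulAut.apply_inv_self]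
  let Φ := SemidirectProduct.lift f₁ f₂ hcompat
  have hΦapp : ∀ (p : SS ⋊[act] Subgroup.centralizer ({θ} : Set (MulAut G))) (x : G),
      ((Φ p : Equiv.Perm G)) x = (p.right : MulAut G) x * (p.left : G) := by
    intro p x; rfl
  have hinj : Function.Injective Φ := by
    rw [injective_iff_map_eq_one]
    intro p hp
    have hpt : ∀ x : G, (p.right : MulAut G) x * (p.left : G) = x := by
      intro x
      have h := congrArg (fun q : nAryAut n (derOp n θ 1) => (q : Equiv.Perm G) x) hp
      simpa [hΦapp p x] using h
    have hleft : (p.left : G) = 1 := by simpa using hpt 1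
    have hright : (p.right : MulAut G) = 1 := by
      apply MulEquiv.ext; intro x
      simpa [hleft] using hpt x
    have h1 : p.left = 1 := Subtype.ext hleft
    have h2 : p.right = 1 := Subtype.ext hright
    ext
    · simp [h1]
    · simp [h2]
  have hsurj : Function.Surjective Φ := by
    rintro ⟨ψ, hψ⟩
    have hψ' : ∀ x : Fin n → G, ψ (derOp n θ 1 x) = derOp n θ 1 (fun i => ψ (x i)) := hψ
    set a := ψ 1 with ha
    have haidem : derOp n θ 1 (fun _ : Fin n => a) = a := by
      have h := hψ' (fun _ => 1)
      rw [derOp_one] at h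
      exact h.symm
    have hacen : a ∈ Subgroup.center G := hcent a haidem
    have haS : a ∈ SS := ⟨hacen, haidem⟩
    have key : ∀ x y : G, ψ (x * θ y) = ((ψ x * a⁻¹) * θ (ψ y * a⁻¹)) * a := by
      intro x y
      have h1 := hψ' (fun i : Fin n => if (i : ℕ) = 0 then x else if (i : ℕ) = 1 then y else 1)
      rw [derOp_pair hn] at h1
      have h2 : (fun i : Fin n => ψ (if (i : ℕ) = 0 then x else if (i : ℕ) = 1 then y else 1))
          = fun i : Fin n =>
            (if (i : ℕ) = 0 then ψ x * a⁻¹ else if (i : ℕ) = 1 then ψ y * a⁻¹ else 1) * a := by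
        funext i
        by_cases h0 : (i : ℕ) = 0
        · simp [h0]
        · by_cases h1' : (i : ℕ) = 1
          · simp [h0, h1']
          · simp [h0, h1', ha]
      rw [h2, derOp_mul_central n θ _ hacen, haidem, derOp_pair hn] at h1
      exact h1
    have hφmul9 : ∀ x y : G, ψ (x * θ y) * a⁻¹ = (ψ x * a⁻¹) * θ (ψ y * a⁻¹) := by
      intro x y; rw [key]; group
    have hφθ : ∀ y : G, ψ (θ y) * a⁻¹ = θ (ψ y * a⁻¹) := by
      intro y
      have h := hφmul9 1 y
      rw [one_mul, ← ha] at h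
      simpa using h
    have hφmul : ∀ x z : G, ψ (x * z) * a⁻¹ = (ψ x * a⁻¹) * (ψ z * a⁻¹) := by
      intro x z
      have h := hφmul9 x (θ⁻¹ z)
      have h2 := hφθ (θ⁻¹ z)
      rw [MulAut.apply_inv_self] at h h2
      rw [h, ← h2]
    let φm : MulAut G := ⟨ψ.trans (Equiv.mulRight a⁻¹), hφmul⟩
    have hφmapp : ∀ x : G, φm x = ψ x * a⁻¹ := fun x => rfl
    have hφmC : φm ∈ Subgroup.centralizer ({θ} : Set (MulAut G)) := by
      rw [Subgroup.mem_centralizer_iff]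
      intro h hh
      rw [Set.mem_singleton_iff] at hh
      subst hh
      apply MulEquiv.ext; intro x
      simp only [MulAut.mul_apply]
      rw [hφmapp, hφmapp, ← hφθ x]
    refine ⟨⟨⟨a, haS⟩, ⟨φm, hφmC⟩⟩, ?_⟩
    apply Subtype.ext; apply Equiv.ext; intro x
    rw [hΦapp]
    show φm x * a = ψ x
    rw [hφmapp]
    simp
  exact ⟨MulEquiv.ofBijective Φ ⟨hinj, hsurj⟩⟩
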